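/- The real Waring rank of the monomial x_0^2 x_1^2 ⋯ x_n^2 (of degree 2n+2) is at most (3^{n+1} − 1)/2. -/

import Mathlib

open MvPolynomial

/-- The Waring rank over `K` of a form `F` of degree `d`. -/
noncomputable def waringRank (K : Type*) [Field K] {n : ℕ} (d : ℕ)
    (F : MvPolynomial (Fin n) K) : ℕ :=
  sInf {s | ∃ (c : Fin s → K) (L : Fin s → Fin n → K),
    F = ∑ i, C (c i) * (∑ j, C (L i j) * X j) ^ d}

open Finset in

lemma waringRank_le_card {K : Type*} [Field K] {n : ℕ} (d : ℕ)
    (F : MvPolynomial (Fin n) K) {S : Type*} [Fintype S]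
    (c : S → K) (L : S → Fin n → K)
    (h : F = ∑ x, C (c x) * (∑ j, C (L x j) * X j) ^ d) :
    waringRank K d F ≤ Fintype.card S := by
  apply Nat.sInf_le
  refine ⟨c ∘ (Fintype.equivFin S).symm, L ∘ (Fintype.equivFin S).symm, ?_⟩
  rw [h, ← Equiv.sum_comp (Fintype.equivFin S).symm
    (fun x => C (c x) * (∑ j, C (L x j) * X j) ^ d)]
  rfl

open Finset


def vv : Fin 3 → ℝ := ![0, 1, -1]
def ww : Fin 3 → ℝ := ![-2, 1, 1]
noncomputable def gg (k : ℕ) : ℝ := ∑ a : Fin 3, ww a * vv a ^ k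

lemma gg_eq (k : ℕ) : gg k = -2 * (0:ℝ)^k + 1 + (-1:ℝ)^k := by
  simp only [gg, Fin.sum_univ_three, vv, ww]
  norm_num [Matrix.cons_val_two, Matrix.tail_cons, Matrix.head_cons]

lemma gg_two : gg 2 = 2 := by norm_num [gg_eq]

lemma gg_ne_zero {k : ℕ} (h : gg k ≠ 0) : 2 ≤ k ∧ Even k := by
  rcases Nat.even_or_odd k with he | ho
  · rcases Nat.eq_zero_or_pos k with rfl | hk
    · exact absurd (by norm_num [gg_eq]) h
    · refine ⟨?_, he⟩
      rcases he with ⟨m, rfl⟩; omega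
  · exfalso; apply h
    rw [gg_eq, Odd.neg_one_pow ho, zero_pow (by rcases ho with ⟨m, rfl⟩; omega)]
    ring

lemma key (n : ℕ) :
    ∑ f : Fin (n+1) → Fin 3,
        C (∏ i, ww (f i)) * (∑ i, C (vv (f i)) * X i) ^ (2*n+2)
      = C ((Nat.multinomial Finset.univ (fun _ : Fin (n+1) => 2) : ℝ) * 2^(n+1))
        * ∏ i, (X i : MvPolynomial (Fin (n+1)) ℝ) ^ 2 := by
  have h1 : ∀ f : Fin (n+1) → Fin 3,
      C (∏ i, ww (f i)) * (∑ i, C (vv (f i)) * X i) ^ (2*n+2)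
      = ∑ k ∈ piAntidiag univ (2*n+2),
          (Nat.multinomial univ k : MvPolynomial (Fin (n+1)) ℝ) *
            (C (∏ i, ww (f i) * vv (f i) ^ k i) * ∏ i, X i ^ k i) := by
    intro f
    rw [Finset.sum_pow_eq_sum_piAntidiag, Finset.mul_sum]
    refine Finset.sum_congr rfl fun k hk => ?_
    simp only [mul_pow, ← C_pow, Finset.prod_mul_distrib, ← map_prod]
    rw [map_mul]
    ring
  simp only [h1]
  rw [Finset.sum_comm]
  have h2 : ∀ k : Fin (n+1) → ℕ,
      ∑ f : Fin (n+1) → Fin 3,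
        (Nat.multinomial univ k : MvPolynomial (Fin (n+1)) ℝ) *
          (C (∏ i, ww (f i) * vv (f i) ^ k i) * ∏ i, X i ^ k i)
      = (Nat.multinomial univ k : MvPolynomial (Fin (n+1)) ℝ) *
          (C (∏ i, gg (k i)) * ∏ i, X i ^ k i) := by
    intro k
    rw [← Finset.mul_sum, ← Finset.sum_mul, ← map_sum]
    have h3 : ∑ x : Fin (n+1) → Fin 3, ∏ i, ww (x i) * vv (x i) ^ k i
        = ∏ i, gg (k i) := (Fintype.prod_sum (fun i a => ww a * vv a ^ k i)).symm
    rw [h3]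
  simp only [h2]
  rw [Finset.sum_eq_single (fun _ : Fin (n+1) => 2)]
  · simp only [gg_two, Finset.prod_const, Finset.card_univ, Fintype.card_fin,
      map_mul, ← C_eq_coe_nat]
    push_cast
    ring
  · intro k hk hne
    have : ∏ i, gg (k i) = 0 := by
      by_contra hc
      have hc' := Finset.prod_ne_zero_iff.mp hc
      have hk2 : ∀ i : Fin (n+1), 2 ≤ k i := fun i => (gg_ne_zero (hc' i (Finset.mem_univ i))).1
      rw [Finset.mem_piAntidiag] at hk
      apply hne
      funext i
      by_contra hi
      have hlt : (2:ℕ) < k i := lt_of_le_of_ne (hk2 i) (Ne.symm hi)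
      have := Finset.sum_lt_sum (f := fun _ : Fin (n+1) => 2) (g := k)
        (fun j _ => hk2 j) ⟨i, Finset.mem_univ i, hlt⟩
      simp [hk.1, Finset.sum_const, Finset.card_univ] at this
      omega
    rw [this, map_zero, zero_mul, mul_zero]
  · intro h
    exact absurd (by simp [Finset.mem_piAntidiag]; ring) h

def sg : Fin 3 → Fin 3 := ![0, 2, 1]

lemma sg_sg (a : Fin 3) : sg (sg a) = a := by revert a; decide
lemma ww_sg (a : Fin 3) : ww (sg a) = ww a := by
  fin_cases a <;> simp [ww, sg]
lemma vv_sg (a : Fin 3) : vv (sg a) = - vv a := by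
  fin_cases a <;> norm_num [vv, sg, Matrix.cons_val_two, Matrix.tail_cons, Matrix.head_cons]
lemma sg_eq_one_iff (a : Fin 3) : sg a = 1 ↔ a = 2 := by revert a; decide
lemma sg_eq_zero_iff (a : Fin 3) : sg a = 0 ↔ a = 0 := by revert a; decide

def Pred {m : ℕ} (f : Fin m → Fin 3) : Prop :=
  ∃ i, f i = 1 ∧ ∀ j, j < i → f j = 0

instance {m : ℕ} : DecidablePred (Pred (m := m)) := fun f =>
  Fintype.decidableExistsFintype

lemma not_both {m : ℕ} {f : Fin m → Fin 3} (h1 : Pred f) (h2 : Pred (sg ∘ f)) :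
    False := by
  obtain ⟨i, hi1, hi2⟩ := h1
  obtain ⟨i', hi1', hi2'⟩ := h2
  have hfi' : f i' = 2 := (sg_eq_one_iff _).mp hi1'
  rcases lt_trichotomy i i' with h | h | h
  · have := hi2' i h
    rw [Function.comp_apply, hi1] at this
    exact absurd this (by decide)
  · rw [h, hfi'] at hi1
    exact absurd hi1 (by decide)
  · rw [hi2 i' h] at hfi'
    exact absurd hfi' (by decide)

lemma at_least {m : ℕ} (f : Fin m → Fin 3) (hf : f ≠ fun _ => 0) :
    Pred f ∨ Pred (sg ∘ f) := by
  have hne : (Finset.univ.filter (fun i => f i ≠ 0)).Nonempty := by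
    rw [Finset.filter_nonempty_iff]
    obtain ⟨i, hi⟩ := Function.ne_iff.mp hf
    exact ⟨i, Finset.mem_univ i, hi⟩
  set i0 := (Finset.univ.filter (fun i => f i ≠ 0)).min' hne with hi0
  have h1 : f i0 ≠ 0 := by
    have := Finset.min'_mem _ hne
    rw [Finset.mem_filter] at this
    exact this.2
  have h2 : ∀ j, j < i0 → f j = 0 := by
    intro j hj
    by_contra hj0
    have : i0 ≤ j := Finset.min'_le _ _ (Finset.mem_filter.mpr ⟨Finset.mem_univ j, hj0⟩)
    omega
  have h3 : f i0 = 1 ∨ f i0 = 2 := by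
    revert h1; generalize f i0 = a; revert a; decide
  rcases h3 with h3 | h3
  · exact Or.inl ⟨i0, h3, h2⟩
  · refine Or.inr ⟨i0, ?_, fun j hj => ?_⟩
    · rw [Function.comp_apply, h3]; decide
    · rw [Function.comp_apply, h2 j hj]; decide

/-- `rk_ℝ(x_0^2 x_1^2 ⋯ x_n^2) ≤ (3^{n+1} − 1)/2`. -/
theorem stmt_9 (n : ℕ) :
    waringRank ℝ (2 * n + 2) (∏ i, (X i : MvPolynomial (Fin (n + 1)) ℝ) ^ 2) ≤
      (3 ^ (n + 1) - 1) / 2 := by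
  classical
  set M : ℝ := (Nat.multinomial Finset.univ (fun _ : Fin (n+1) => 2) : ℝ) * 2^(n+1) with hM
  have hM0 : M ≠ 0 := by
    have := Nat.multinomial_pos (Finset.univ : Finset (Fin (n+1))) (fun _ => 2)
    positivity
  set t : (Fin (n+1) → Fin 3) → MvPolynomial (Fin (n+1)) ℝ :=
    fun f => C (∏ i, ww (f i)) * (∑ i, C (vv (f i)) * X i) ^ (2*n+2) with ht
  have hkey : ∑ f : Fin (n+1) → Fin 3, t f = C M * ∏ i, (X i : MvPolynomial (Fin (n+1)) ℝ)^2 := key n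
  have ht0 : t (fun _ => 0) = 0 := by
    have hz : (∑ i, C (vv ((fun _ : Fin (n+1) => (0 : Fin 3)) i)) * X i : MvPolynomial (Fin (n+1)) ℝ) = 0 := by
      simp [vv]
    rw [ht]
    simp only [hz]
    rw [zero_pow (by omega), mul_zero]
  have htsg : ∀ f, t (sg ∘ f) = t f := by
    intro f
    simp only [ht, Function.comp_apply, ww_sg, vv_sg, map_neg, neg_mul]
    rw [Finset.sum_neg_distrib]
    congr 1
    exact Even.neg_pow ⟨n+1, by ring⟩ _
  set A : Finset (Fin (n+1) → Fin 3) := Finset.univ.erase (fun _ => 0) with hA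
  set R : Finset (Fin (n+1) → Fin 3) := A.filter Pred with hR
  have hiota_mem : ∀ f ∈ A, (sg ∘ f) ∈ A := by
    intro f hf
    rw [hA, Finset.mem_erase] at hf ⊢
    refine ⟨?_, Finset.mem_univ _⟩
    intro h
    apply hf.1
    funext i
    have := congrFun h i
    simpa [sg_eq_zero_iff] using this
  have hfilter : A.filter (fun f => ¬ Pred f) = R.image (fun f => sg ∘ f) := by
    ext f
    simp only [Finset.mem_filter, Finset.mem_image, hR]
    constructor
    · rintro ⟨hfA, hnp⟩
      refine ⟨sg ∘ f, ⟨⟨hiota_mem f hfA, ?_⟩, ?_⟩⟩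
      · exact (at_least f (by rw [hA, Finset.mem_erase] at hfA; exact hfA.1)).resolve_left hnp
      · funext i; simp [Function.comp, sg_sg]
    · rintro ⟨g, hg, rfl⟩
      exact ⟨hiota_mem g hg.1, fun hp => not_both hg.2 hp⟩
  have hinj : ∀ a ∈ R, ∀ b ∈ R, (fun f => sg ∘ f) a = (fun f => sg ∘ f) b → a = b := by
    intro a _ b _ hab
    funext i
    have := congrFun hab i
    rw [← sg_sg (a i), ← sg_sg (b i)]
    simp only [Function.comp_apply] at this
    rw [this]
  have hsumA : ∑ f ∈ A, t f = ∑ f ∈ R, (t f + t f) := by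
    rw [← Finset.sum_filter_add_sum_filter_not A Pred, hfilter, Finset.sum_image hinj]
    simp only [htsg, ← hR]
    rw [← Finset.sum_add_distrib]
  have hcardA : A.card = 3^(n+1) - 1 := by
    rw [hA, Finset.card_erase_of_mem (Finset.mem_univ _), Finset.card_univ]
    simp
  have hcard2 : A.card = 2 * R.card := by
    have h := Finset.card_filter_add_card_filter_not (s := A) (p := Pred)
    rw [hfilter, Finset.card_image_of_injOn hinj, ← hR] at h
    omega
  have h0 : ∑ f : Fin (n+1) → Fin 3, t f = ∑ f ∈ A, t f := by
    rw [hA, ← Finset.add_sum_erase _ t (Finset.mem_univ (fun _ => 0)), ht0, zero_add]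
  have hrep : (∏ i, (X i : MvPolynomial (Fin (n+1)) ℝ)^2)
      = ∑ f ∈ R, C (2 * (∏ i, ww (f i)) * M⁻¹) * (∑ j, C (vv (f j)) * X j) ^ (2*n+2) := by
    calc (∏ i, (X i : MvPolynomial (Fin (n+1)) ℝ)^2)
        = C M⁻¹ * (C M * ∏ i, (X i : MvPolynomial (Fin (n+1)) ℝ)^2) := by
          rw [← mul_assoc, ← C_mul, inv_mul_cancel₀ hM0, C_1, one_mul]
      _ = C M⁻¹ * ∑ f ∈ R, (t f + t f) := by rw [← hkey, h0, hsumA]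
      _ = ∑ f ∈ R, C (2 * (∏ i, ww (f i)) * M⁻¹) * (∑ j, C (vv (f j)) * X j) ^ (2*n+2) := by
          rw [Finset.mul_sum]
          refine Finset.sum_congr rfl fun f hf => ?_
          rw [ht]
          simp only [map_mul, map_ofNat]
          ring
  have hle := waringRank_le_card (2*n+2) (∏ i, (X i : MvPolynomial (Fin (n+1)) ℝ)^2)
    (S := {x // x ∈ R}) (fun x => 2 * (∏ i, ww (x.1 i)) * M⁻¹) (fun x j => vv (x.1 j)) ?_
  · rw [Fintype.card_coe] at hle
    refine hle.trans ?_
    have h1 : 1 ≤ 3^(n+1) := Nat.one_le_pow _ _ (by norm_num)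
    generalize hp : 3^(n+1) = p at hcardA h1 ⊢
    omega
  · rw [hrep, ← Finset.sum_coe_sort R]
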